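/- Let (A, φ) be a *-probability space, let x, y ∈ A, and let u ∈ A be a Haar unitary such that {u} and {x, y} are *-free. If φ(p) = 0 for every p ∈ P_{1,1}(x,y) ∪ P_{2,2}(x,y), then the pair (ux, uy) satisfies condition (3.6). -/

import Mathlib

section
variable {A : Type*} [Ring A] [Algebra ℂ A] [StarRing A] [StarModule ℂ A]

/-- The alternating product `x^{ω(1)} ⋯ x^{ω(k₁)} y^{ω(k₁+1)} ⋯ y^{ω(m)}`:
the first `k₁` letters are from `{x, x*}`, the remaining ones from `{y, y*}`,
with star-parities given by `ω` (`true` = starred). -/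
def altProd (x y : A) (m k₁ : ℕ) (ω : Fin m → Bool) : A :=
  (List.ofFn (fun t : Fin m =>
    if t.val < k₁ then (if ω t then star x else x)
    else (if ω t then star y else y))).prod

/-- The factor of the sets `P_{i,j}(x,y)`: for odd length the alternating product itself,
for even length the centered alternating product `z - φ(z)·1`. -/
noncomputable def facElt (φ : A → ℂ) (x y : A) (m k₁ : ℕ) (ω : Fin m → Bool) : A :=
  if Odd m then altProd x y m k₁ ω
  else altProd x y m k₁ ω - φ (altProd x y m k₁ ω) • (1 : A)

/-- Condition (3.6): the expectations of the admissible products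
`p_{i₁,i₂} p_{i₂,i₃} ⋯ p_{i_{n-1},i_n}` of factors from the sets `P_{i,j}(x,y)` vanish.
Factor `i` is an alternating word of length `len i ≥ 1` with `kk i` letters from
`{x, x*}` followed by `len i - kk i` letters from `{y, y*}`; the chain condition links the
second index of each factor with the first index of the next one; and the factors are
ordered so that either (i) the `x`-only factors precede the `y`-only factors, or (ii)
exactly one factor mixes letters of both types, with `x`-only factors before it and
`y`-only factors after it. -/
noncomputable def Condition36 (φ : A → ℂ) (x y : A) : Prop :=
  ∀ N : ℕ, 1 ≤ N → ∀ len kk : Fin N → ℕ, ∀ ω : (i : Fin N) → Fin (len i) → Bool,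
    (∀ i, 1 ≤ len i) →
    (∀ i, kk i ≤ len i) →
    (∀ i, (List.ofFn (ω i)).Chain' (· ≠ ·)) →
    (∀ i : Fin N, ∀ h : i.val + 1 < N,
      (List.ofFn (ω ⟨i.val + 1, h⟩)).headD false =
        (if Odd (len i) then (List.ofFn (ω i)).headD false
          else !(List.ofFn (ω i)).headD false)) →
    ((∃ m : ℕ, m ≤ N ∧ (∀ i : Fin N, i.val < m → kk i = len i) ∧
        (∀ i : Fin N, m ≤ i.val → kk i = 0)) ∨
     (∃ m : Fin N, (∀ i : Fin N, i.val < m.val → kk i = len i) ∧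
        0 < kk m ∧ kk m < len m ∧ (∀ i : Fin N, m.val < i.val → kk i = 0))) →
    φ (List.ofFn (fun i => facElt φ x y (len i) (kk i) (ω i))).prod = 0

/-- The pairs `(x, y)` and `(x', y')` have the same bi-`*`-distribution. -/
def SameBiDist (φ : A → ℂ) (x y x' y' : A) : Prop :=
  ∀ n : ℕ, 1 ≤ n → ∀ k : ℕ, k ≤ n → ∀ ω : Fin n → Bool,
    φ (altProd x y n k ω) = φ (altProd x' y' n k ω)

/-- A Haar unitary. -/
def IsHaarUnitary (φ : A → ℂ) (u : A) : Prop :=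
  u * star u = 1 ∧ star u * u = 1 ∧
  ∀ n : ℕ, 1 ≤ n → φ (u ^ n) = 0 ∧ φ ((star u) ^ n) = 0

/-- `*`-freeness of a family of subsets: alternating products of centered elements of the
generated unital `*`-subalgebras have zero expectation. -/
def FreeFamily (φ : A → ℂ) {ι : Type*} (S : ι → Set A) : Prop :=
  ∀ m : ℕ, 1 ≤ m → ∀ idx : Fin m → ι,
    (∀ i : Fin m, ∀ h : i.val + 1 < m, idx i ≠ idx ⟨i.val + 1, h⟩) →
    ∀ a : Fin m → A,
      (∀ i, a i ∈ StarAlgebra.adjoin ℂ (S (idx i)) ∧ φ (a i) = 0) →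
      φ (List.ofFn a).prod = 0

end

namespace C36aux
set_option linter.unusedSectionVars false
variable {A : Type*} [Ring A] [Algebra ℂ A] [StarRing A] [StarModule ℂ A]

def pl (p : A × Bool) : A := if p.2 then star p.1 else p.1
def sh (u : A) (p : A × Bool) : A := if p.2 then star p.1 * star u else u * p.1
def Ul (u : A) (b : Bool) : A := if b then 1 else u
def Vl (u : A) (b : Bool) : A := if b then star u else 1

theorem head_snd_ofFn {α β : Type*} {n : ℕ} (f : Fin n → α × β) (hn : 0 < n)
    (h' : List.ofFn f ≠ []) :
    (List.ofFn f).head h' = f ⟨0, hn⟩ := by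
  rw [List.head_eq_getElem, List.getElem_ofFn]

theorem getLast_ofFn' {α : Type*} {n : ℕ} (f : Fin n → α) (hn : 0 < n)
    (h' : List.ofFn f ≠ []) :
    (List.ofFn f).getLast h' = f ⟨n - 1, by omega⟩ := by
  rw [List.getLast_eq_getElem, List.getElem_ofFn]
  congr 1
  simp

theorem headD_ofFn {n : ℕ} (f : Fin n → Bool) (hn : 0 < n) :
    (List.ofFn f).headD false = f ⟨0, hn⟩ := by
  rcases n with _ | n
  · omega
  · rw [List.ofFn_succ]
    rfl

theorem alt_get {n : ℕ} (f : Fin n → Bool) (hch : (List.ofFn f).Chain' (· ≠ ·)) :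
    ∀ (j : ℕ) (hj : j < n),
      f ⟨j, hj⟩ = if Even j then f ⟨0, by omega⟩ else !f ⟨0, by omega⟩ := by
  intro j
  induction j with
  | zero => intro hj; simp
  | succ j ih =>
    intro hj
    have hstep : f ⟨j+1, hj⟩ = !f ⟨j, by omega⟩ := by
      have h1 := List.isChain_iff_getElem.mp hch j (by simp; omega)
      rw [List.getElem_ofFn, List.getElem_ofFn] at h1
      have h2 : f ⟨j, by omega⟩ ≠ f ⟨j+1, hj⟩ := by
        convert h1 using 2
      cases hb : f ⟨j, by omega⟩ <;> cases hc : f ⟨j+1, hj⟩ <;> simp_all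
    rw [hstep, ih (by omega)]
    rcases Nat.even_or_odd j with he | ho
    · simp [he, Nat.even_add_one, he]
    · have h2 : ¬ Even j := Nat.not_even_iff_odd.mpr ho
      simp [h2, Nat.even_add_one]

theorem altProd_shift (u x y : A) (m k : ℕ) (ω : Fin m → Bool) :
    altProd (u*x) (u*y) m k ω =
      ((List.ofFn (fun s : Fin m => ((if s.val < k then x else y), ω s))).map (sh u)).prod := by
  unfold altProd
  rw [List.map_ofFn]
  refine congrArg List.prod (congrArg List.ofFn ?_)
  funext s
  by_cases hs : s.val < k <;> rcases hb : ω s <;> simp [hs, hb, sh, star_mul]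

theorem altProd_plain (x y : A) (m k : ℕ) (ω : Fin m → Bool) :
    altProd x y m k ω =
      ((List.ofFn (fun s : Fin m => ((if s.val < k then x else y), ω s))).map pl).prod := by
  unfold altProd
  rw [List.map_ofFn]
  refine congrArg List.prod (congrArg List.ofFn ?_)
  funext s
  by_cases hs : s.val < k <;> rcases hb : ω s <;> simp [hs, hb, pl]

theorem sh_Ul (u : A) (hu : star u * u = 1) (p : A × Bool) :
    sh u p * Ul u (!p.2) = Ul u p.2 * pl p := by
  rcases p with ⟨z, b⟩
  cases b <;> simp [sh, pl, Ul, mul_assoc, hu]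

theorem shift_prod (u : A) (hu : star u * u = 1) :
    ∀ (l : List (A × Bool)) (p : A × Bool),
    ((p::l).map Prod.snd).Chain' (· ≠ ·) →
    ((p::l).map (sh u)).prod =
      Ul u p.2 * ((p::l).map pl).prod * Vl u (((p::l).getLast (by simp)).2) := by
  intro l
  induction l with
  | nil =>
    intro p _
    rcases p with ⟨z, b⟩
    cases b <;> simp [sh, pl, Ul, Vl, mul_assoc]
  | cons q l ih =>
    intro p hch
    have hch2 : List.Chain' (· ≠ ·) (p.2 :: q.2 :: (l.map Prod.snd)) := by simpa using hch
    have hch' : ((q::l).map Prod.snd).Chain' (· ≠ ·) := by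
      show List.IsChain _ _
      simpa using hch2.tail
    have hne : p.2 ≠ q.2 := hch2.rel_head
    have hq : q.2 = !p.2 := by cases hb : p.2 <;> cases hc : q.2 <;> simp [hb, hc] at hne ⊢
    have hrec := ih q hch'
    have hlast : ((p::q::l).getLast (by simp)) = ((q::l).getLast (by simp)) := by
      simp [List.getLast_cons]
    rw [List.map_cons, List.prod_cons, hrec, hlast, hq]
    simp only [List.map_cons, List.prod_cons, ← mul_assoc]
    rw [sh_Ul u hu]

theorem shift_altProd (u x y : A) (hu : star u * u = 1) (m k : ℕ) (hm : 0 < m)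
    (ω : Fin m → Bool) (hch : (List.ofFn ω).Chain' (· ≠ ·)) :
    altProd (u*x) (u*y) m k ω =
      Ul u (ω ⟨0, hm⟩) * altProd x y m k ω * Vl u (ω ⟨m - 1, by omega⟩) := by
  set f : Fin m → A × Bool := fun s => ((if s.val < k then x else y), ω s) with hf
  have hLne : List.ofFn f ≠ [] := by
    intro h
    have := congrArg List.length h
    simp at this
    omega
  have hsnd : (List.ofFn f).map Prod.snd = List.ofFn ω := by
    rw [List.map_ofFn]; rfl
  rcases hL : List.ofFn f with _ | ⟨p, l⟩
  · exact absurd hL hLne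
  · have hchain : ((p :: l).map Prod.snd).Chain' (· ≠ ·) := by
      rw [← hL, hsnd]; exact hch
    have e1 := shift_prod u hu l p hchain
    have hhead : p = f ⟨0, hm⟩ := by
      have h1 : (List.ofFn f).head? = some (f ⟨0, hm⟩) := by
        rw [List.head?_eq_head hLne, head_snd_ofFn f hm]
      rw [hL] at h1
      simpa using h1
    have hlast2 : ((p :: l).getLast (by simp)) = f ⟨m - 1, by omega⟩ := by
      have h2 : (List.ofFn f).getLast? = some (f ⟨m - 1, by omega⟩) := by
        rw [List.getLast?_eq_getLast hLne, getLast_ofFn' f hm]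
      rw [hL, List.getLast?_eq_getLast (l := p :: l) (by simp)] at h2
      simpa using h2
    rw [altProd_shift, altProd_plain x y m k ω, hL, e1, hlast2, hhead]

theorem altProd_mem (x y : A) (m k : ℕ) (ω : Fin m → Bool) :
    altProd x y m k ω ∈ StarAlgebra.adjoin ℂ ({x, y} : Set A) := by
  unfold altProd
  apply list_prod_mem
  intro z hz
  rw [List.mem_ofFn] at hz
  obtain ⟨s, rfl⟩ := hz
  have hx : x ∈ StarAlgebra.adjoin ℂ ({x, y} : Set A) :=
    StarAlgebra.subset_adjoin ℂ _ (by simp)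
  have hy : y ∈ StarAlgebra.adjoin ℂ ({x, y} : Set A) :=
    StarAlgebra.subset_adjoin ℂ _ (by simp)
  by_cases hs : s.val < k <;> rcases hb : ω s <;>
    simp [hs, hb, hx, hy, star_mem hx, star_mem hy]

def piece (u : A) (q : A × Bool × Bool) : List (A × Bool) :=
  (if q.2.1 then [] else [(u, true)]) ++ [(q.1, false)] ++
    (if q.2.2 then [(star u, true)] else [])

theorem piece_ne (u : A) (q : A × Bool × Bool) : piece u q ≠ [] := by
  rcases q with ⟨w, h, t⟩; cases h <;> cases t <;> simp [piece]

theorem piece_prod (u : A) (q : A × Bool × Bool) :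
    ((piece u q).map Prod.fst).prod = Ul u q.2.1 * q.1 * Vl u q.2.2 := by
  rcases q with ⟨w, h, t⟩; cases h <;> cases t <;> simp [piece, Ul, Vl, mul_assoc]

theorem piece_head (u : A) (q : A × Bool × Bool) :
    ((piece u q).head (piece_ne u q)).2 = !q.2.1 := by
  rcases q with ⟨w, h, t⟩; cases h <;> cases t <;> simp [piece]

theorem piece_chain (u : A) (q : A × Bool × Bool) :
    (piece u q).Chain' (fun p r => p.2 ≠ r.2) := by
  rcases q with ⟨w, h, t⟩; cases h <;> cases t <;> simp [piece, List.Chain', List.isChain_cons_cons]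

theorem piece_last (u : A) (q : A × Bool × Bool) :
    ((piece u q).getLast (piece_ne u q)).2 = q.2.2 := by
  rcases q with ⟨w, h, t⟩; cases h <;> cases t <;> simp [piece, List.getLast_append]

theorem big_prod (u : A) :
    ∀ fac : List (A × Bool × Bool),
    ((fac.map (piece u)).flatten.map Prod.fst).prod =
      (fac.map (fun q => Ul u q.2.1 * q.1 * Vl u q.2.2)).prod := by
  intro fac
  induction fac with
  | nil => simp
  | cons q fac ih =>
    simp only [List.map_cons, List.flatten_cons, List.map_append, List.prod_append,
      List.prod_cons, ih, piece_prod]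

theorem big_chain (u : A) :
    ∀ fac : List (A × Bool × Bool), fac.Chain' (fun p q => p.2.2 = q.2.1) →
    ((fac.map (piece u)).flatten).Chain' (fun p r => p.2 ≠ r.2) := by
  intro fac
  induction fac with
  | nil => simp [List.Chain']
  | cons q fac ih =>
    intro hch
    simp only [List.map_cons, List.flatten_cons]
    refine (piece_chain u q).append (ih hch.tail) ?_
    intro a ha b hb
    rcases fac with _ | ⟨q', fac⟩
    · simp at hb
    · have hqq : q.2.2 = q'.2.1 := hch.rel_head
      have ha' : a = (piece u q).getLast (piece_ne u q) := by
        rwa [List.getLast?_eq_getLast (piece_ne u q), Option.mem_some_iff, eq_comm] at ha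
      have hb' : b = ((piece u q').head (piece_ne u q')) := by
        have e : ((q' :: fac).map (piece u)).flatten
            = (piece u q' ++ (fac.map (piece u)).flatten) := by simp
        rw [e, List.head?_append_of_ne_nil _ (piece_ne u q'),
          List.head?_eq_head (piece_ne u q'), Option.mem_some_iff, eq_comm] at hb
        exact hb
      rw [ha', hb', piece_last, piece_head, hqq]
      simp

theorem free_list (φ : A → ℂ) {ι : Type*} {S : ι → Set A} (hfree : FreeFamily φ S)
    (l : List (A × ι)) (hne : l ≠ [])
    (hch : l.Chain' (fun p q => p.2 ≠ q.2))
    (hmem : ∀ p ∈ l, p.1 ∈ StarAlgebra.adjoin ℂ (S p.2) ∧ φ p.1 = 0) :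
    φ (l.map Prod.fst).prod = 0 := by
  have hlen : 1 ≤ l.length := List.length_pos_iff.mpr hne
  have key := hfree l.length hlen (fun i => (l.get i).2)
    (by
      intro i h
      exact List.isChain_iff_getElem.mp hch i.val (by omega))
    (fun i => (l.get i).1)
    (by
      intro i
      exact hmem (l.get i) (l.get_mem _))
  have e : List.ofFn (fun i => (l.get i).1) = l.map Prod.fst := by
    conv_rhs => rw [← List.ofFn_get l]
    rw [List.map_ofFn]
    rfl
  rwa [e] at key

end C36aux

/-- If all odd-length alternating products in `x, x*, y, y*` (the elements of
`P_{1,1}(x,y) ∪ P_{2,2}(x,y)`) have vanishing expectation, and `u` is a Haar unitary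
`*`-free from `{x, y}`, then `(ux, uy)` satisfies condition (3.6). -/
theorem condition36_of_haar_shift
    {A : Type*} [Ring A] [Algebra ℂ A] [StarRing A] [StarModule ℂ A]
    (φ : A →ₗ[ℂ] ℂ) (hφ1 : φ 1 = 1) (hφs : ∀ a : A, φ (star a) = starRingEnd ℂ (φ a))
    (x y u : A) (hu : IsHaarUnitary (fun z => φ z) u)
    (hfree : FreeFamily (fun z => φ z) (fun b : Bool => if b then {u} else {x, y}))
    (hodd : ∀ m k₁ : ℕ, Odd m → k₁ ≤ m → ∀ ω : Fin m → Bool,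
      (List.ofFn ω).Chain' (· ≠ ·) → φ (altProd x y m k₁ ω) = 0) :
    Condition36 (fun z => φ z) (u * x) (u * y) := by
  classical
  obtain ⟨huu, huu', hmom⟩ := hu
  have hφu : φ u = 0 := by simpa using (hmom 1 le_rfl).1
  have hφus : φ (star u) = 0 := by simpa using (hmom 1 le_rfl).2
  intro N hN len kk ω hlen1 hkk hch hlink _
  set h : Fin N → Bool := fun i => ω i ⟨0, hlen1 i⟩ with hh
  set t : Fin N → Bool := fun i => if Odd (len i) then h i else !(h i) with ht
  set w : Fin N → A := fun i => altProd x y (len i) (kk i) (ω i) with hw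
  set wt : Fin N → A := fun i =>
    if Odd (len i) then w i else w i - φ (w i) • (1 : A) with hwt
  have hlastω : ∀ i, ω i ⟨len i - 1, by have := hlen1 i; omega⟩ = t i := by
    intro i
    have halt := C36aux.alt_get (ω i) (hch i) (len i - 1) (by have := hlen1 i; omega)
    rw [halt]
    rcases Nat.even_or_odd (len i) with he | ho
    · have h1 : Odd (len i - 1) := Nat.Even.sub_odd (hlen1 i) he odd_one
      have h2 : ¬ Even (len i - 1) := Nat.not_even_iff_odd.mpr h1
      have h3 : ¬ Odd (len i) := Nat.not_odd_iff_even.mpr he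
      simp [ht, h2, h3, hh]
    · have h1 : Even (len i - 1) := Nat.Odd.sub_odd ho odd_one
      simp [ht, h1, ho, hh]
  have hwmem : ∀ i, w i ∈ StarAlgebra.adjoin ℂ ({x, y} : Set A) := fun i =>
    C36aux.altProd_mem x y _ _ (ω i)
  have hwtmem : ∀ i, wt i ∈ StarAlgebra.adjoin ℂ ({x, y} : Set A) := by
    intro i
    by_cases hoi : Odd (len i)
    · simpa [hwt, hoi] using hwmem i
    · simp only [hwt, if_neg hoi]
      exact sub_mem (hwmem i) (SMulMemClass.smul_mem _ (one_mem _))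
  have hwt0 : ∀ i, φ (wt i) = 0 := by
    intro i
    by_cases hoi : Odd (len i)
    · simp only [hwt, if_pos hoi, hw]
      exact hodd _ _ hoi (hkk i) (ω i) (hch i)
    · simp [hwt, if_neg hoi, hφ1]
  have humem : u ∈ StarAlgebra.adjoin ℂ ({u} : Set A) :=
    StarAlgebra.subset_adjoin ℂ _ rfl
  have hfacElt : ∀ i, facElt (fun z => φ z) (u*x) (u*y) (len i) (kk i) (ω i)
      = C36aux.Ul u (h i) * wt i * C36aux.Vl u (t i) := by
    intro i
    have hshift0 := C36aux.shift_altProd u x y huu' (len i) (kk i) (hlen1 i) (ω i) (hch i)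
    rw [hlastω i] at hshift0
    have hshift : altProd (u*x) (u*y) (len i) (kk i) (ω i)
        = C36aux.Ul u (h i) * w i * C36aux.Vl u (t i) := hshift0
    by_cases hoi : Odd (len i)
    · have hti : t i = h i := by simp [ht, hoi]
      unfold facElt
      rw [if_pos hoi, hshift, show wt i = w i from by simp [hwt, hoi]]
    · have hti : t i = !h i := by simp [ht, hoi]
      have hwt_def : wt i = w i - φ (w i) • (1:A) := by simp [hwt, hoi]
      unfold facElt
      rw [if_neg hoi, hshift]
      rcases hb : h i
      · -- h i = false : factor is u * w * u⋆
        have h3 : φ (u * wt i * star u) = 0 := by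
          have hm := C36aux.free_list (fun z => φ z) hfree
            [(u, true), (wt i, false), (star u, true)] (by simp)
            (by simp [List.Chain', List.isChain_cons_cons])
            (by
              intro p hp
              simp only [List.mem_cons, List.not_mem_nil, or_false] at hp
              rcases hp with rfl | rfl | rfl
              · exact ⟨by simpa using humem, hφu⟩
              · exact ⟨by simpa using hwtmem i, hwt0 i⟩
              · exact ⟨by simpa using star_mem humem, hφus⟩)
          simpa [mul_assoc] using hm
        have expand : u * w i * star u = u * wt i * star u + φ (w i) • (1:A) := by
          rw [hwt_def, mul_sub, sub_mul, mul_smul_comm, smul_mul_assoc, mul_one, huu,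
            sub_add_cancel]
        have key : φ (u * w i * star u) = φ (w i) := by
          rw [expand, map_add, h3, map_smul, hφ1, smul_eq_mul, mul_one, zero_add]
        rw [hti, hb]
        simp only [C36aux.Ul, C36aux.Vl, Bool.not_false, Bool.false_eq_true,
          ite_false, ite_true]
        rw [key, expand, add_sub_cancel_right]
      · -- h i = true : factor is w itself
        rw [hti, hb]
        simp only [C36aux.Ul, C36aux.Vl, Bool.not_true, ite_true, ite_false,
          Bool.false_eq_true, one_mul, mul_one]
        rw [hwt_def]
  have hfchain : (List.ofFn (fun i => (wt i, h i, t i))).Chain'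
      (fun p q => p.2.2 = q.2.1) := by
    show List.IsChain _ _
    rw [List.isChain_iff_getElem]
    intro j hj
    simp only [List.length_ofFn] at hj
    have hj' : j + 1 < N := by omega
    simp only [List.getElem_ofFn]
    show t _ = h _
    have hl := hlink ⟨j, by omega⟩ hj'
    rw [C36aux.headD_ofFn _ (hlen1 ⟨j+1, hj'⟩), C36aux.headD_ofFn _ (hlen1 ⟨j, by omega⟩)] at hl
    exact hl.symm
  set fac : List (A × Bool × Bool) := List.ofFn (fun i => (wt i, h i, t i)) with hfacl
  have hfac_len : fac.length = N := by simp [hfacl]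
  have hflat_ne : (fac.map (C36aux.piece u)).flatten ≠ [] := by
    intro hnil
    have hmem0 : C36aux.piece u (fac.get ⟨0, by omega⟩) = [] := by
      apply List.flatten_eq_nil_iff.mp hnil
      exact List.mem_map_of_mem (List.get_mem _ _)
    exact C36aux.piece_ne u _ hmem0
  have hchain := C36aux.big_chain u fac hfchain
  have hmemall : ∀ p ∈ (fac.map (C36aux.piece u)).flatten,
      p.1 ∈ StarAlgebra.adjoin ℂ
        ((fun b : Bool => if b then ({u} : Set A) else {x, y}) p.2) ∧ φ p.1 = 0 := by
    intro p hp
    rw [List.mem_flatten] at hp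
    obtain ⟨L, hL, hpL⟩ := hp
    rw [List.mem_map] at hL
    obtain ⟨q, hq, rfl⟩ := hL
    rw [hfacl, List.mem_ofFn] at hq
    obtain ⟨i, rfl⟩ := hq
    rcases hhi : h i <;> rcases hti2 : t i <;>
      simp only [C36aux.piece, hhi, hti2, Bool.false_eq_true, ite_true, ite_false,
        List.append_nil, List.nil_append, List.cons_append, List.singleton_append,
        List.mem_cons, List.mem_singleton, List.not_mem_nil, or_false] at hpL <;>
      first
        | (rcases hpL with rfl | rfl | rfl
           · exact ⟨by simpa using humem, hφu⟩
           · exact ⟨by simpa using hwtmem i, hwt0 i⟩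
           · exact ⟨by simpa using star_mem humem, hφus⟩)
        | (rcases hpL with rfl | rfl
           · exact ⟨by simpa using humem, hφu⟩
           · exact ⟨by simpa using hwtmem i, hwt0 i⟩)
        | (rcases hpL with rfl | rfl
           · exact ⟨by simpa using hwtmem i, hwt0 i⟩
           · exact ⟨by simpa using star_mem humem, hφus⟩)
        | (rcases hpL with rfl
           exact ⟨by simpa using hwtmem i, hwt0 i⟩)
  have hzero := C36aux.free_list (fun z => φ z) hfree _ hflat_ne hchain hmemall
  have heq : ((fac.map (C36aux.piece u)).flatten.map Prod.fst).prod
      = (List.ofFn (fun i => facElt (fun z => φ z) (u*x) (u*y) (len i) (kk i) (ω i))).prod := by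
    rw [C36aux.big_prod, hfacl, List.map_ofFn]
    refine congrArg List.prod (congrArg List.ofFn ?_)
    funext i
    simp only [Function.comp]
    exact (hfacElt i).symm
  rw [heq] at hzero
  exact hzero
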